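/- Let X be a compact metric space and 𝒱 a Hermitian line bundle over X with a finite trivializing atlas {h_j : U_j × ℂ → 𝒱|_{U_j}} and subordinate partition of unity {γ_j}. Let ξ_j(x) = h_j(x, γ_j(x)^{1/2}). Then for the correspondence ℰ = Γ(𝒱, α) with left action f·ξ = ξ·(f∘α), the rank-one operator θ_{ξ,η} equals φ(⟨η,ξ⟩∘α^{-1}) for all ξ, η ∈ ℰ, where φ is the structure map. Consequently ℰ admits the structure of a Hilbert C(X)-bimodule with left inner product ⟨ξ,η⟩_L = ⟨η,ξ⟩∘α^{-1}. -/

import Mathlib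

/-!
STATEMENT 1. Let `X` be a compact metric space and `𝒱` a Hermitian line bundle over `X`
(a vector bundle with model fibre `ℂ`, each fibre a one-dimensional complex inner product
space), with a finite trivializing atlas `h_j : U_j × ℂ → 𝒱|_{U_j}` and a subordinate
partition of unity `γ_j`; set `ξ_j(x) = h_j(x, γ_j(x)^{1/2})`.  For the correspondence
`ℰ = Γ(𝒱, α)` (continuous sections with left action `f·ξ = ξ·(f∘α)`, i.e. pointwise
`(f·ξ)(x) = f(α x) • ξ x`, and pointwise right `C(X)`-inner product
`⟨ξ,η⟩(x) = ⟪ξ x, η x⟫`), the rank-one operator `θ_{ξ,η} : ζ ↦ ξ·⟨η,ζ⟩` coincides with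
`φ(⟨η,ξ⟩ ∘ α⁻¹)`, where `φ` is the structure map; pointwise this is the identity
`⟪η x, ζ x⟫ • ξ x = ⟪η x, ξ x⟫ • ζ x`.  Consequently `ℰ` is a Hilbert `C(X)`-bimodule
with left inner product `⟨ξ,η⟩_L = ⟨η,ξ⟩ ∘ α⁻¹`: the bimodule compatibility
`ξ·⟨η,ζ⟩_R = ⟨ξ,η⟩_L · ζ` holds.
-/

open Bundle

theorem statement1
    (X : Type*) [MetricSpace X] [CompactSpace X]
    (α : X ≃ₜ X)
    (V : X → Type*) [∀ x, NormedAddCommGroup (V x)] [∀ x, InnerProductSpace ℂ (V x)]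
    [TopologicalSpace (Bundle.TotalSpace ℂ V)] [FiberBundle ℂ V] [VectorBundle ℂ ℂ V]
    -- a finite trivializing atlas with subordinate partition of unity and the
    -- associated generating sections ξ_j(x) = h_j(x, γ_j(x)^{1/2})
    (n : ℕ) (U : Fin n → Set X) (hUopen : ∀ j, IsOpen (U j))
    (h : ∀ j, Trivialization ℂ (π ℂ V)) (hbase : ∀ j, (h j).baseSet = U j)
    (γ : Fin n → C(X, ℝ)) (hγ0 : ∀ j, 0 ≤ γ j)
    (hγsupp : ∀ j, tsupport (γ j) ⊆ U j) (hγsum : ∀ x, (∑ j, γ j x) = 1)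
    (ξgen : Fin n → ∀ x, V x)
    (hξgen : ∀ j, ∀ x ∈ U j, ξgen j x
      = (h j).symm x ((Real.sqrt (γ j x) : ℂ))) :
    -- (1) θ_{ξ,η} = φ(⟨η,ξ⟩ ∘ α⁻¹), pointwise: for all sections ξ, η, ζ and all x,
    --     (ξ · ⟨η,ζ⟩_R)(x) = (φ(⟨η,ξ⟩_R ∘ α⁻¹) ζ)(x), i.e.
    (∀ ξ η ζ : ∀ x, V x,
      (Continuous fun x => (Bundle.TotalSpace.mk x (ξ x) : Bundle.TotalSpace ℂ V)) →
      (Continuous fun x => (Bundle.TotalSpace.mk x (η x) : Bundle.TotalSpace ℂ V)) →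
      (Continuous fun x => (Bundle.TotalSpace.mk x (ζ x) : Bundle.TotalSpace ℂ V)) →
      ∀ x : X, (inner ℂ (η x) (ζ x) : ℂ) • ξ x = (inner ℂ (η x) (ξ x) : ℂ) • ζ x) ∧
    -- (2) consequently, with left inner product ⟨ξ,η⟩_L(x) = ⟨η,ξ⟩_R(α⁻¹ x)
    --     and left action (f·ζ)(x) = f(α x) • ζ x, the Hilbert bimodule compatibility
    --     ξ·⟨η,ζ⟩_R = ⟨ξ,η⟩_L·ζ holds:
    (∀ ξ η ζ : ∀ x, V x, ∀ x : X,
      (inner ℂ (η x) (ζ x) : ℂ) • ξ x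
        = (inner ℂ (η (α.symm (α x))) (ξ (α.symm (α x))) : ℂ) • ζ x) := by

  have key : ∀ (ξ η ζ : ∀ x, V x) (x : X),
      (inner ℂ (η x) (ζ x) : ℂ) • ξ x = (inner ℂ (η x) (ξ x) : ℂ) • ζ x := by
    intro ξ η ζ x
    set L := Trivialization.continuousLinearEquivAt ℂ (trivializationAt ℂ V x) x
      (FiberBundle.mem_baseSet_trivializationAt' x) with hL
    have hv : ∀ v : V x, v = L v • L.symm 1 := by
      intro v
      have h1 : L.symm (L v • (1:ℂ)) = v := by simp
      rw [map_smul] at h1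
      exact h1.symm
    rw [hv (ξ x), hv (η x), hv (ζ x)]
    simp only [inner_smul_left, inner_smul_right, smul_smul]
    congr 1
    ring
  constructor
  · intro ξ η ζ _ _ _ x
    exact key ξ η ζ x
  · intro ξ η ζ x
    rw [α.symm_apply_apply]
    exact key ξ η ζ x
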